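/- Fix q ∈ (0,1), ε ∈ (0,1), integers γ ≥ 1 and k_max ≥ 1, and a probability vector π̃ = (π̃_1,…,π̃_{k_max}), and let b_θ = 1 + q(e^θ − 1). Then for every integer t ≥ k_max, the non-asymptotic capacity bounds sandwich the asymptotic capacity 1 − q: λ_t^L ≤ 1 − q ≤ λ_t^U, where λ_t^L = sup_{θ>0} { 1 − (log b_{γθ})/(γθ) + (log ε)/(tθ) − c_K(t)/(tθ) } with c_K(t) = Σ_{k=1}^{k_max} π̃_k · log( binomial(t+k−1, k−1) ), and λ_t^U = inf_{θ>0} { 1 + (log b_{−γθ})/(γθ) − (log ε)/(tθ) }. (In particular, for every θ > 0 one has log b_{θ} ≥ qθ and log b_{−θ} ≥ −qθ.) -/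

import Mathlib

lemma key_log (q θ : ℝ) (hq0 : 0 ≤ q) (hq1 : q ≤ 1) :
    q * θ ≤ Real.log (1 + q * (Real.exp θ - 1)) := by
  have h := convexOn_exp.2 (Set.mem_univ θ) (Set.mem_univ (0 : ℝ)) hq0
    (by linarith : (0:ℝ) ≤ 1 - q) (by ring)
  simp only [smul_eq_mul, mul_zero, add_zero, Real.exp_zero, mul_one] at h
  have h2 : Real.exp (q * θ) ≤ 1 + q * (Real.exp θ - 1) := by nlinarith
  calc q * θ = Real.log (Real.exp (q * θ)) := (Real.log_exp _).symm
    _ ≤ _ := Real.log_le_log (Real.exp_pos _) h2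

/-- with `b_θ = 1 + q(e^θ − 1)` and
`c_K(t) = ∑_{k=1}^{k_max} π̃_k log C(t+k−1, k−1)`, for every integer `t ≥ k_max`
the non-asymptotic capacity bounds sandwich the asymptotic capacity `1 − q`:
`λ_t^L ≤ 1 − q ≤ λ_t^U`.  In particular, for every `θ > 0`,
`log b_θ ≥ qθ` and `log b_{−θ} ≥ −qθ`. -/
theorem stmt9 (q ε : ℝ) (hq : q ∈ Set.Ioo (0 : ℝ) 1) (hε : ε ∈ Set.Ioo (0 : ℝ) 1)
    (γ kmax : ℕ) (hγ : 1 ≤ γ) (hkmax : 1 ≤ kmax)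
    (π' : ℕ → ℝ) (hπ'0 : ∀ k ∈ Finset.Icc 1 kmax, 0 ≤ π' k)
    (hπ'1 : ∑ k ∈ Finset.Icc 1 kmax, π' k = 1) :
    (∀ t : ℕ, kmax ≤ t →
      sSup {x : ℝ | ∃ θ : ℝ, 0 < θ ∧
          x = 1 - Real.log (1 + q * (Real.exp ((γ : ℝ) * θ) - 1)) / ((γ : ℝ) * θ)
              + Real.log ε / ((t : ℝ) * θ)
              - (∑ k ∈ Finset.Icc 1 kmax,
                  π' k * Real.log ((Nat.choose (t + k - 1) (k - 1) : ℝ)))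
                / ((t : ℝ) * θ)} ≤ 1 - q ∧
      1 - q ≤ sInf {x : ℝ | ∃ θ : ℝ, 0 < θ ∧
          x = 1 + Real.log (1 + q * (Real.exp (-((γ : ℝ) * θ)) - 1)) / ((γ : ℝ) * θ)
              - Real.log ε / ((t : ℝ) * θ)}) ∧
    ∀ θ : ℝ, 0 < θ →
      q * θ ≤ Real.log (1 + q * (Real.exp θ - 1)) ∧
      -(q * θ) ≤ Real.log (1 + q * (Real.exp (-θ) - 1)) := by
  obtain ⟨hq0, hq1⟩ := hq
  obtain ⟨hε0, hε1⟩ := hε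
  have hγ0 : (0:ℝ) < γ := by exact_mod_cast hγ
  have hlogε : Real.log ε < 0 := Real.log_neg hε0 hε1
  constructor
  · intro t ht
    have ht0 : (0:ℝ) < t := by
      have : 1 ≤ t := le_trans hkmax ht
      exact_mod_cast this
    constructor
    · apply Real.sSup_le
      · rintro x ⟨θ, hθ, rfl⟩
        have hγθ : 0 < (γ:ℝ) * θ := mul_pos hγ0 hθ
        have htθ : 0 < (t:ℝ) * θ := mul_pos ht0 hθ
        have h1 : q ≤ Real.log (1 + q * (Real.exp ((γ:ℝ)*θ) - 1)) / ((γ:ℝ)*θ) := by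
          rw [le_div_iff₀ hγθ]
          calc q * ((γ:ℝ)*θ) = q * ((γ:ℝ)*θ) := rfl
            _ ≤ _ := key_log q _ hq0.le hq1.le
        have h2 : Real.log ε / ((t:ℝ)*θ) ≤ 0 :=
          div_nonpos_of_nonpos_of_nonneg hlogε.le htθ.le
        have h3 : 0 ≤ (∑ k ∈ Finset.Icc 1 kmax,
            π' k * Real.log ((Nat.choose (t + k - 1) (k - 1) : ℝ))) / ((t:ℝ)*θ) := by
          apply div_nonneg _ htθ.le
          apply Finset.sum_nonneg
          intro k hk
          apply mul_nonneg (hπ'0 k hk)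
          apply Real.log_nonneg
          have : 1 ≤ (t + k - 1).choose (k - 1) := Nat.choose_pos (by omega)
          exact_mod_cast this
        linarith
      · linarith
    · refine le_csInf ⟨_, 1, one_pos, rfl⟩ ?_
      rintro x ⟨θ, hθ, rfl⟩
      have hγθ : 0 < (γ:ℝ) * θ := mul_pos hγ0 hθ
      have htθ : 0 < (t:ℝ) * θ := mul_pos ht0 hθ
      have h1 : -q ≤ Real.log (1 + q * (Real.exp (-((γ:ℝ)*θ)) - 1)) / ((γ:ℝ)*θ) := by
        rw [le_div_iff₀ hγθ]
        have := key_log q (-((γ:ℝ)*θ)) hq0.le hq1.le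
        nlinarith
      have h2 : Real.log ε / ((t:ℝ)*θ) ≤ 0 :=
        div_nonpos_of_nonpos_of_nonneg hlogε.le htθ.le
      linarith
  · intro θ hθ
    refine ⟨key_log q θ hq0.le hq1.le, ?_⟩
    have := key_log q (-θ) hq0.le hq1.le
    linarith [this]
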